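/- Let C be a ring, let R and B be C-algebras, and let D be an ideal of R. For each n, let π_n : R ⊗_C B → (R/D^n) ⊗_C B be the map induced by the quotient R → R/D^n tensored with the identity on B. Then ker(π_n) = (ker π_1)^n. -/
import Mathlib

open TensorProduct

/-- with `π n : R ⊗[C] B →ₐ[C] (R ⧸ D ^ n) ⊗[C] B` the base change to `B`
of the quotient map `R → R ⧸ D ^ n`, we have `ker (π n) = (ker (π 1)) ^ n`. -/
theorem stmt_0 (C R B : Type*) [CommRing C] [CommRing R] [CommRing B]
    [Algebra C R] [Algebra C B] (D : Ideal R) (n : ℕ) :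
    RingHom.ker
        (Algebra.TensorProduct.map (Ideal.Quotient.mkₐ C (D ^ n)) (AlgHom.id C B)) =
      (RingHom.ker
        (Algebra.TensorProduct.map (Ideal.Quotient.mkₐ C (D ^ 1)) (AlgHom.id C B))) ^ n := by
  rw [Algebra.TensorProduct.rTensor_ker _ (Ideal.Quotient.mkₐ_surjective C _),
      Algebra.TensorProduct.rTensor_ker _ (Ideal.Quotient.mkₐ_surjective C _),
      pow_one]
  have h : ∀ m : ℕ, RingHom.ker (Ideal.Quotient.mkₐ C (D ^ m)) = D ^ m := fun m =>
    Ideal.Quotient.mkₐ_ker C _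
  rw [h, show RingHom.ker (Ideal.Quotient.mkₐ C D) = D from Ideal.Quotient.mkₐ_ker C D,
    Ideal.map_pow]
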